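/- Let p be prime, t < p, and P₁,…,P_m homogeneous polynomials on 𝔽_p^n of degree t with P₁ not identically zero. Let L₁,…,L_m be linear forms in k variables with L_i(x) = Σ_j λ_{i,j} x_j. If P₁(L₁(x)) + … + P_m(L_m(x)) ≡ 0 as a function of x ∈ (𝔽_p^n)^k, then the tensor powers satisfy a nontrivial linear relation Σ_{i=1}^m α_i L_i^{⊗t} = 0 with α₁ ≠ 0; in particular L₁^{⊗t} lies in the span of L₂^{⊗t},…,L_m^{⊗t}. -/

import Mathlib

/-- The `t`-th tensor power of a linear form `L ∈ 𝔽_p^k`, with entries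
`∏_{j=1}^t λ_{i_j}` indexed by `(i₁,…,i_t) ∈ [k]^t`. -/
def tensorPow {p k : ℕ} (t : ℕ) (L : Fin k → ZMod p) : (Fin t → Fin k) → ZMod p :=
  fun idx => ∏ j : Fin t, L (idx j)

open MvPolynomial

variable {p : ℕ} [Fact p.Prime]

/-- Evaluating a homogeneous polynomial at a scaled point. -/
lemma eval_scale_aux {n t : ℕ} {F : MvPolynomial (Fin n) (ZMod p)}
    (h : F.IsHomogeneous t) (c : ZMod p) (z : Fin n → ZMod p) :
    eval (fun v => c * z v) F = c ^ t * eval z F := by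
  rw [eval_eq', eval_eq', Finset.mul_sum]
  refine Finset.sum_congr rfl fun d hd => ?_
  have hdeg : ∑ v, d v = t := by
    have h1 := h (mem_support_iff.mp hd)
    change Finsupp.weight (fun _ => 1) d = t at h1
    rw [← Finsupp.degree_eq_weight_one (R := ℕ)] at h1
    rw [← h1, Finsupp.degree]
    exact (Finset.sum_subset (Finset.subset_univ _)
      (by intro x _ hx; simpa using hx)).symm
  calc coeff d F * ∏ v, (c * z v) ^ d v
      = coeff d F * ((∏ v, c ^ d v) * ∏ v, z v ^ d v) := by
        rw [← Finset.prod_mul_distrib]; simp [mul_pow]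
    _ = c ^ t * (coeff d F * ∏ v, z v ^ d v) := by
        rw [Finset.prod_pow_eq_pow_sum, hdeg]; ring

/-- The linear form `∑ⱼ cⱼ Xⱼ` as a polynomial. -/
noncomputable def linF {k : ℕ} (c : Fin k → ZMod p) : MvPolynomial (Fin k) (ZMod p) :=
  ∑ j, C (c j) * X j

lemma linF_isHomogeneous {k : ℕ} (c : Fin k → ZMod p) : (linF c).IsHomogeneous 1 :=
  IsHomogeneous.sum _ _ _ fun j _ => isHomogeneous_C_mul_X (c j) j

lemma eval_linF {k : ℕ} (c : Fin k → ZMod p) (y : Fin k → ZMod p) :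
    eval y (linF c) = ∑ j, c j * y j := by
  simp [linF]

lemma pderiv_linF {k : ℕ} (c : Fin k → ZMod p) (j : Fin k) :
    pderiv j (linF c) = C (c j) := by
  rw [linF, map_sum]
  rw [Finset.sum_eq_single j]
  · simp
  · intro b _ hb; simp [pderiv_X_of_ne hb]
  · simp

/-- Iterated partial derivatives along a list of indices. -/
noncomputable def Dseq {k : ℕ} (js : List (Fin k)) (Q : MvPolynomial (Fin k) (ZMod p)) :
    MvPolynomial (Fin k) (ZMod p) :=
  js.foldl (fun q j => pderiv j q) Q

@[simp] lemma Dseq_nil {k : ℕ} (Q : MvPolynomial (Fin k) (ZMod p)) : Dseq [] Q = Q := rfl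

@[simp] lemma Dseq_cons {k : ℕ} (j : Fin k) (js : List (Fin k))
    (Q : MvPolynomial (Fin k) (ZMod p)) : Dseq (j :: js) Q = Dseq js (pderiv j Q) := rfl

@[simp] lemma Dseq_zero {k : ℕ} (js : List (Fin k)) : Dseq js (0 : MvPolynomial (Fin k) (ZMod p)) = 0 := by
  induction js with
  | nil => rfl
  | cons j js ih => simp [ih]

lemma Dseq_C_mul {k : ℕ} (js : List (Fin k)) (a : ZMod p)
    (Q : MvPolynomial (Fin k) (ZMod p)) : Dseq js (C a * Q) = C a * Dseq js Q := by
  induction js generalizing Q with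
  | nil => rfl
  | cons j js ih => simp [pderiv_C_mul, ih]

lemma Dseq_sum {k m : ℕ} (js : List (Fin k)) (f : Fin m → MvPolynomial (Fin k) (ZMod p)) :
    Dseq js (∑ i, f i) = ∑ i, Dseq js (f i) := by
  induction js generalizing f with
  | nil => rfl
  | cons j js ih => simp [map_sum, ih]

lemma Dseq_lin_pow {k : ℕ} (c : Fin k → ZMod p) (js : List (Fin k)) :
    Dseq js ((linF c) ^ js.length)
      = C (((js.length).factorial : ZMod p) * (js.map c).prod) := by
  induction js with
  | nil => simp
  | cons j js ih =>
    rw [List.length_cons, Dseq_cons, pderiv_pow, pderiv_linF]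
    have : ((js.length + 1 : ℕ) : MvPolynomial (Fin k) (ZMod p))
        * linF c ^ (js.length + 1 - 1) * C (c j)
        = C ((js.length + 1 : ℕ) * c j) * linF c ^ js.length := by
      push_cast [C_add, C_mul, C_eq_coe_nat, C_1]
      ring
    rw [this, Dseq_C_mul, ih, ← C_mul, List.map_cons, List.prod_cons,
      Nat.factorial_succ]
    push_cast
    ring

/-- If `P₁,…,P_m` are homogeneous polynomials of degree `t < p` on `𝔽_p^n` with `P₁ ≠ 0`
and `∑ P_i(L_i(x)) ≡ 0` on `(𝔽_p^n)^k`, then there is a nontrivial linear relation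
`∑ α_i L_i^{⊗t} = 0` with `α₁ ≠ 0`; in particular `L₁^{⊗t}` lies in the span of the
other tensor powers. -/
theorem tensorPow_dependent_of_vanishing {p k n m t : ℕ} [Fact p.Prime] (ht : t < p)
    (L : Fin (m + 1) → Fin k → ZMod p)
    (P : Fin (m + 1) → MvPolynomial (Fin n) (ZMod p))
    (hhom : ∀ i, (P i).IsHomogeneous t) (hP0 : P 0 ≠ 0)
    (hvanish : ∀ x : Fin k → Fin n → ZMod p,
      (∑ i : Fin (m + 1),
        MvPolynomial.eval (fun v : Fin n => ∑ j : Fin k, L i j * x j v) (P i)) = 0) :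
    ∃ α : Fin (m + 1) → ZMod p, α 0 ≠ 0 ∧
      (∑ i : Fin (m + 1), α i • tensorPow t (L i)) = 0 := by
  have hcard : (t : Cardinal) ≤ Cardinal.mk (ZMod p) := by
    rw [Cardinal.mk_fintype, ZMod.card]
    exact_mod_cast ht.le
  -- find a point where P 0 is nonzero
  obtain ⟨z₀, hz₀⟩ : ∃ z : Fin n → ZMod p, eval z (P 0) ≠ 0 := by
    by_contra h
    push_neg at h
    exact hP0 ((hhom 0).eq_zero_of_forall_eval_eq_zero_of_le_card h hcard)
  refine ⟨fun i => eval z₀ (P i), hz₀, ?_⟩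
  -- the auxiliary polynomial in k variables
  set R : MvPolynomial (Fin k) (ZMod p) :=
      ∑ i, C (eval z₀ (P i)) * (linF (L i)) ^ t with hRdef
  have hRhom : R.IsHomogeneous t := by
    refine IsHomogeneous.sum _ _ _ fun i _ => ?_
    have := ((isHomogeneous_C (σ := Fin k) (eval z₀ (P i))).mul
      ((linF_isHomogeneous (L i)).pow t))
    simpa using this
  have hReval : ∀ y : Fin k → ZMod p, eval y R = 0 := by
    intro y
    have hv := hvanish fun j v => y j * z₀ v
    rw [hRdef]
    rw [map_sum]
    rw [← hv]
    refine Finset.sum_congr rfl fun i _ => ?_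
    have h1 : (fun v : Fin n => ∑ j : Fin k, L i j * (y j * z₀ v))
        = fun v => (∑ j : Fin k, L i j * y j) * z₀ v := by
      funext v
      rw [Finset.sum_mul]
      exact Finset.sum_congr rfl fun j _ => by ring
    rw [h1, eval_scale_aux (hhom i)]
    simp [eval_linF]
    ring
  have hR0 : R = 0 := hRhom.eq_zero_of_forall_eval_eq_zero_of_le_card hReval hcard
  have hfac : ((t.factorial : ZMod p)) ≠ 0 := by
    rw [Ne, ZMod.natCast_eq_zero_iff]
    intro hdvd
    exact absurd ((Fact.out : p.Prime).dvd_factorial.mp hdvd) (not_le.mpr ht)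
  funext idx
  have h1 : Dseq (List.ofFn idx) R = 0 := by rw [hR0, Dseq_zero]
  rw [hRdef, Dseq_sum] at h1
  have h2 : ∀ i : Fin (m + 1),
      Dseq (List.ofFn idx) (C (eval z₀ (P i)) * linF (L i) ^ t)
        = C (eval z₀ (P i) * ((t.factorial : ZMod p) * ∏ s, L i (idx s))) := by
    intro i
    rw [Dseq_C_mul]
    have hd := Dseq_lin_pow (L i) (List.ofFn idx)
    rw [List.length_ofFn] at hd
    rw [hd, ← C_mul]
    congr 1
    rw [List.map_ofFn, List.prod_ofFn]
    rfl
  simp only [h2, ← map_sum] at h1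
  have h3 : ∑ i, eval z₀ (P i) * ((t.factorial : ZMod p) * ∏ s, L i (idx s)) = 0 :=
    C_injective _ _ (by rw [h1, C_0])
  have h4 : (t.factorial : ZMod p) * ∑ i, eval z₀ (P i) * ∏ s, L i (idx s) = 0 := by
    rw [Finset.mul_sum, ← h3]
    exact Finset.sum_congr rfl fun i _ => by ring
  have h5 := (mul_eq_zero.mp h4).resolve_left hfac
  simpa [tensorPow] using h5
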